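/- Let q ≥ 3 be a prime power and identify the alphabet with the finite field F_q. Let M ⊆ F_q^q be a linear MDS code of length q with minimum distance 2, and let C0 and C1 be linear MDS codes of length q with minimum distance 3 such that C0, C1 ⊂ M and C0 ≠ C1. Then (C0 \ C1, C1 \ C0) is a spherical bitrade in the Hamming graph H(q, q) of volume q^{q−2} − q^{q−3}. -/

import Mathlib

open scoped BigOperators

/-- The ball of radius 1 centered at `x` in a graph `G`. -/
def ball1 {V : Type*} (G : SimpleGraph V) (x : V) : Set V := {y | y = x ∨ G.Adj x y}

/-- A perfect one-error-correcting code: the balls of radius 1 centered at the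
vertices of `C` partition the vertex set. -/
def IsPerfectCode {V : Type*} (G : SimpleGraph V) (C : Set V) : Prop :=
  ∀ x : V, ∃! c, c ∈ C ∧ c ∈ ball1 G x

/-- A perfect bitrade: a pair of disjoint nonempty vertex sets such that every ball of
radius 1 contains exactly one vertex of each, or none of either. -/
def IsPerfectBitrade {V : Type*} (G : SimpleGraph V) (T0 T1 : Set V) : Prop :=
  Disjoint T0 T1 ∧ T0.Nonempty ∧ T1.Nonempty ∧
    ∀ x : V,
      ((∃! y, y ∈ T0 ∧ y ∈ ball1 G x) ∧ (∃! y, y ∈ T1 ∧ y ∈ ball1 G x)) ∨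
        (∀ y, y ∈ T0 ∪ T1 → y ∉ ball1 G x)

/-- A spherical bitrade: a pair of disjoint nonempty vertex sets such that every sphere of
radius 1 contains exactly one vertex of each, or none of either. -/
def IsSphericalBitrade {V : Type*} (G : SimpleGraph V) (S0 S1 : Set V) : Prop :=
  Disjoint S0 S1 ∧ S0.Nonempty ∧ S1.Nonempty ∧
    ∀ x : V,
      ((∃! y, y ∈ S0 ∧ G.Adj x y) ∧ (∃! y, y ∈ S1 ∧ G.Adj x y)) ∨
        (∀ y, y ∈ S0 ∪ S1 → ¬ G.Adj x y)

/-- The Hamming graph `H(n,q)`: vertices are `n`-tuples over an alphabet of size `q`,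
adjacent iff they differ in exactly one coordinate. -/
def hammingGraph (n q : ℕ) : SimpleGraph (Fin n → Fin q) where
  Adj x y := hammingDist x y = 1
  symm := by constructor; intro x y h; rwa [hammingDist_comm]
  loopless := by constructor; intro x h; simp [hammingDist_self] at h

/-- `f` is a `μ`-eigenfunction of `G`: `f` is not identically zero and
`μ · f x = ∑_{y ∈ O(x)} f y` for every vertex `x`. -/
def IsEigenfun {V : Type*} (G : SimpleGraph V) (μ : ℝ) (f : V → ℝ) : Prop :=
  f ≠ 0 ∧ ∀ x : V, μ * f x = ∑ᶠ y ∈ G.neighborSet x, f y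

/-- The characteristic function of a set of vertices. -/
noncomputable def chi {V : Type*} (C : Set V) : V → ℝ := Set.indicator C 1

/-- The code `C` has minimum (graph) distance exactly `d`. -/
def HasMinDist {V : Type*} (G : SimpleGraph V) (C : Set V) (d : ℕ) : Prop :=
  (∀ x ∈ C, ∀ y ∈ C, x ≠ y → (d : ℕ∞) ≤ G.edist x y) ∧
    ∃ x ∈ C, ∃ y ∈ C, x ≠ y ∧ G.edist x y = d

/-- The code `C` of `n`-tuples has minimum Hamming distance exactly `d`. -/
def HasMinHDist {n q : ℕ} (C : Set (Fin n → Fin q)) (d : ℕ) : Prop :=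
  (∀ x ∈ C, ∀ y ∈ C, x ≠ y → d ≤ hammingDist x y) ∧
    ∃ x ∈ C, ∃ y ∈ C, x ≠ y ∧ hammingDist x y = d

/-- `G` is distance-regular with intersection numbers `p i j k`. -/
def IsDistRegular {V : Type*} (G : SimpleGraph V) (p : ℕ → ℕ → ℕ → ℕ) : Prop :=
  G.Connected ∧ ∀ (i j k : ℕ) (x y : V), G.edist x y = k →
    {z : V | G.edist x z = i ∧ G.edist z y = j}.ncard = p i j k

/-- The Hamming graph on `n`-tuples over the alphabet `F`. -/
def hammingGraphF (n : ℕ) (F : Type*) [Fintype F] [DecidableEq F] :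
    SimpleGraph (Fin n → F) where
  Adj x y := hammingDist x y = 1
  symm := by constructor; intro x y h; rwa [hammingDist_comm]
  loopless := by constructor; intro x h; simp [hammingDist_self] at h

/-- Minimum Hamming distance exactly `d`, for codes over an arbitrary alphabet. -/
def HasMinHDistF {n : ℕ} {F : Type*} [Fintype (Fin n)] [DecidableEq F]
    (C : Set (Fin n → F)) (d : ℕ) : Prop :=
  (∀ x ∈ C, ∀ y ∈ C, x ≠ y → d ≤ hammingDist x y) ∧
    ∃ x ∈ C, ∃ y ∈ C, x ≠ y ∧ hammingDist x y = d

section Aux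

variable {q : ℕ} {F : Type} [Field F] [Fintype F] [DecidableEq F]

lemma hdist_filter {n : ℕ} (x y : Fin n → F) :
    hammingDist x y = (Finset.univ.filter fun k => x k ≠ y k).card := rfl

lemma hdist_one_iff {n : ℕ} (x y : Fin n → F) :
    hammingDist x y = 1 ↔ ∃ i δ, δ ≠ 0 ∧ y = x + Pi.single i δ := by
  rw [hdist_filter, Finset.card_eq_one]
  constructor
  · rintro ⟨i, hi⟩
    have hmem : ∀ k : Fin n, x k ≠ y k ↔ k = i := by
      intro k
      rw [← Finset.mem_singleton, ← hi, Finset.mem_filter]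
      simp
    refine ⟨i, y i - x i, sub_ne_zero_of_ne (Ne.symm ((hmem i).2 rfl)), ?_⟩
    funext k
    by_cases hk : k = i
    · subst hk; simp
    · have : x k = y k := by
        by_contra h'
        exact hk ((hmem k).1 h')
      simp [Pi.single_eq_of_ne hk, ← this]
  · rintro ⟨i, δ, hδ, rfl⟩
    refine ⟨i, ?_⟩
    ext k
    rw [Finset.mem_filter, Finset.mem_singleton]
    by_cases hk : k = i
    · subst hk; simp [hδ]
    · simp [hk, Pi.single_eq_of_ne hk]

/-- standard basis vector -/
def eb (i : Fin q) : Fin q → F := Pi.single i 1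

lemma map_single_eq (φ : (Fin q → F) →ₗ[F] F) (i : Fin q) (δ : F) :
    φ (Pi.single i δ) = δ * φ (eb i) := by
  have : (Pi.single i δ : Fin q → F) = δ • (eb i : Fin q → F) := by
    funext k
    by_cases hk : k = i
    · subst hk; simp [eb]
    · simp [eb, Pi.single_eq_of_ne hk]
  rw [this, map_smul, smul_eq_mul]

lemma r_injective (φ ψ : (Fin q → F) →ₗ[F] F) (C : Submodule F (Fin q → F))
    (hC : ∀ v, v ∈ C ↔ φ v = 0 ∧ ψ v = 0)
    (hφ : ∀ i, φ (eb i) ≠ (0 : F))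
    (hd : ∀ x ∈ C, ∀ y ∈ C, x ≠ y → 3 ≤ hammingDist x y) :
    Function.Injective (fun i : Fin q => ψ (eb i) / φ (eb i)) := by
  intro i j hij
  by_contra hne
  simp only at hij
  have hmul : ψ (eb i) * φ (eb j) = ψ (eb j) * φ (eb i) := by
    rw [div_eq_div_iff (hφ i) (hφ j)] at hij
    exact hij
  set v : Fin q → F := φ (eb j) • (eb i : Fin q → F) - φ (eb i) • (eb j : Fin q → F)
    with hv
  have hvC : v ∈ C := by
    rw [hC]
    constructor
    · simp only [hv, map_sub, map_smul, smul_eq_mul]; ring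
    · simp only [hv, map_sub, map_smul, smul_eq_mul]
      rw [mul_comm (φ (eb j)), mul_comm (φ (eb i)), hmul]; ring
  have hvi : v i = φ (eb j) := by
    simp [hv, eb, Pi.single_eq_of_ne hne]
  have hv0 : v ≠ 0 := by
    intro h
    apply hφ j
    rw [← hvi, h, Pi.zero_apply]
  have h3 := hd v hvC 0 C.zero_mem hv0
  have h2 : hammingDist v (0 : Fin q → F) ≤ 2 := by
    rw [hdist_filter]
    have hsub : (Finset.univ.filter fun k => v k ≠ (0 : Fin q → F) k)
        ⊆ {i, j} := by
      intro k hk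
      simp only [Finset.mem_filter, Pi.zero_apply] at hk
      by_contra hk'
      simp only [Finset.mem_insert, Finset.mem_singleton] at hk'
      push_neg at hk'
      apply hk.2
      simp [hv, eb, Pi.single_eq_of_ne hk'.1, Pi.single_eq_of_ne hk'.2]
    calc (Finset.univ.filter fun k => v k ≠ (0 : Fin q → F) k).card
        ≤ ({i, j} : Finset (Fin q)).card := Finset.card_le_card hsub
      _ ≤ 2 := by
          apply le_trans (Finset.card_insert_le _ _)
          simp
  omega

lemma unique_nbr (φ ψ : (Fin q → F) →ₗ[F] F) (C : Submodule F (Fin q → F))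
    (hC : ∀ v, v ∈ C ↔ φ v = 0 ∧ ψ v = 0)
    (hφ : ∀ i, φ (eb i) ≠ (0 : F))
    (hbij : Function.Bijective (fun i : Fin q => ψ (eb i) / φ (eb i)))
    (x : Fin q → F) (hx : φ x ≠ 0) :
    ∃! c, c ∈ C ∧ hammingDist x c = 1 := by
  obtain ⟨i₀, hi₀⟩ := hbij.2 (ψ x / φ x)
  simp only at hi₀
  set δ₀ : F := -(φ x / φ (eb i₀)) with hδ₀
  have hδ₀ne : δ₀ ≠ 0 := by
    simp only [hδ₀, neg_ne_zero]
    exact div_ne_zero hx (hφ i₀)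
  have hkey : ∀ (i : Fin q) (δ : F), x + Pi.single i δ ∈ C ↔
      (i = i₀ ∧ δ = -(φ x / φ (eb i))) := by
    intro i δ
    rw [hC]
    simp only [map_add, map_single_eq]
    constructor
    · rintro ⟨h1, h2⟩
      refine ⟨?_, ?_⟩
      · apply hbij.1
        simp only
        rw [hi₀, div_eq_div_iff (hφ i) hx]
        linear_combination ψ (eb i) * h1 - φ (eb i) * h2
      · rw [← neg_div, eq_div_iff (hφ i)]
        linear_combination h1
    · rintro ⟨heq, rfl⟩
      have h5 : ψ (eb i) * φ x = ψ x * φ (eb i) := by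
        apply (div_eq_div_iff (hφ i) hx).1
        rw [heq, hi₀]
      constructor
      · rw [neg_mul, add_neg_eq_zero, div_mul_eq_mul_div, eq_div_iff (hφ i)]
      · rw [neg_mul, add_neg_eq_zero, div_mul_eq_mul_div, eq_div_iff (hφ i)]
        linear_combination -h5
  refine ⟨x + Pi.single i₀ δ₀, ⟨?_, ?_⟩, ?_⟩
  · rw [hkey]; exact ⟨rfl, hδ₀⟩
  · rw [hdist_one_iff]; exact ⟨i₀, δ₀, hδ₀ne, rfl⟩
  · rintro c ⟨hcC, hcd⟩
    rw [hdist_one_iff] at hcd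
    obtain ⟨i, δ, hδ, rfl⟩ := hcd
    rw [hkey] at hcC
    obtain ⟨heq, rfl⟩ := hcC
    subst heq
    rfl

end Aux

/-- Over a finite field `F` with `q ≥ 3` elements, if `M` is a linear MDS code
of length `q` with minimum distance 2 and `C0 ≠ C1` are linear MDS codes of length `q` with
minimum distance 3 contained (strictly) in `M`, then `(C0 \ C1, C1 \ C0)` is a spherical
bitrade in `H(q,q)` of volume `q^(q-2) - q^(q-3)`. -/
theorem statement13 (q : ℕ) (hq : 3 ≤ q)
    (F : Type) [Field F] [Fintype F] [DecidableEq F] (hcard : Fintype.card F = q)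
    (M C0 C1 : Submodule F (Fin q → F))
    (hMmds : Nat.card M = q ^ (q - 1)) (hMdist : HasMinHDistF (M : Set (Fin q → F)) 2)
    (hC0mds : Nat.card C0 = q ^ (q - 2)) (hC0dist : HasMinHDistF (C0 : Set (Fin q → F)) 3)
    (hC1mds : Nat.card C1 = q ^ (q - 2)) (hC1dist : HasMinHDistF (C1 : Set (Fin q → F)) 3)
    (hC0M : C0 < M) (hC1M : C1 < M) (hne : C0 ≠ C1) :
    IsSphericalBitrade (hammingGraphF q F)
      ((C0 : Set (Fin q → F)) \ (C1 : Set (Fin q → F)))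
      ((C1 : Set (Fin q → F)) \ (C0 : Set (Fin q → F))) ∧
    ((C0 : Set (Fin q → F)) \ (C1 : Set (Fin q → F))).ncard =
      q ^ (q - 2) - q ^ (q - 3) := by
    classical
  have hq2 : 2 ≤ q := by omega
  have hdimV : Module.finrank F (Fin q → F) = q := by
    rw [Module.finrank_pi, Fintype.card_fin]
  have frk : ∀ (P : Submodule F (Fin q → F)) (m : ℕ), Nat.card P = q ^ m →
      Module.finrank F P = m := by
    intro P m hP
    have h1 : Fintype.card P = Fintype.card F ^ Module.finrank F P :=
      Module.card_eq_pow_finrank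
    rw [hcard] at h1
    rw [Nat.card_eq_fintype_card, h1] at hP
    exact Nat.pow_right_injective hq2 hP
  have hfM : Module.finrank F M = q - 1 := frk M _ hMmds
  have hf0 : Module.finrank F C0 = q - 2 := frk C0 _ hC0mds
  have hf1 : Module.finrank F C1 = q - 2 := frk C1 _ hC1mds
  have hMtop : M < ⊤ := by
    rcases lt_or_eq_of_le (le_top : M ≤ ⊤) with h | h
    · exact h
    · exfalso
      have h2 := hfM
      rw [h, finrank_top, hdimV] at h2
      omega
  obtain ⟨x₀, -, hx₀⟩ := SetLike.exists_of_lt hMtop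
  obtain ⟨φ, hφx₀, hφmap⟩ := Submodule.exists_dual_map_eq_bot_of_notMem hx₀ inferInstance
  have hMle : M ≤ LinearMap.ker φ := LinearMap.le_ker_iff_map.2 hφmap
  have hkerlt : LinearMap.ker φ < ⊤ :=
    lt_top_iff_ne_top.2 (fun h => hφx₀ (by
      have : x₀ ∈ LinearMap.ker φ := by rw [h]; trivial
      exact LinearMap.mem_ker.1 this))
  have hk1 : Module.finrank F (LinearMap.ker φ) = q - 1 := by
    have h1 := Submodule.finrank_lt hkerlt.ne
    rw [hdimV] at h1
    have h2 := Submodule.finrank_mono hMle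
    rw [hfM] at h2
    omega
  have hMker : M = LinearMap.ker φ :=
    Submodule.eq_of_le_of_finrank_eq hMle (by rw [hfM, hk1])
  have hφ0 : ∀ v, v ∈ M ↔ φ v = 0 := by
    intro v; rw [hMker, LinearMap.mem_ker]
  have hφi : ∀ i : Fin q, φ (eb i) ≠ (0 : F) := by
    intro i h
    have hmem : (eb i : Fin q → F) ∈ M := (hφ0 _).2 h
    have hne0 : (eb i : Fin q → F) ≠ 0 := by
      intro h'
      have := congrFun h' i
      simp [eb] at this
    have h2 := hMdist.1 _ hmem 0 M.zero_mem hne0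
    have h1 : hammingDist (eb i : Fin q → F) (0 : Fin q → F) = 1 := by
      rw [hammingDist_comm, hdist_one_iff]
      exact ⟨i, 1, one_ne_zero, by simp [eb]⟩
    omega
  have getψ : ∀ C : Submodule F (Fin q → F), Module.finrank F C = q - 2 → C < M →
      ∃ ψ : (Fin q → F) →ₗ[F] F, ∀ v, v ∈ C ↔ φ v = 0 ∧ ψ v = 0 := by
    intro C hfC hCM
    obtain ⟨m, hmM, hmC⟩ := SetLike.exists_of_lt hCM
    obtain ⟨ψ, hψm, hψmap⟩ := Submodule.exists_dual_map_eq_bot_of_notMem hmC inferInstance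
    have hCψ : C ≤ LinearMap.ker ψ := LinearMap.le_ker_iff_map.2 hψmap
    have hCK : C ≤ LinearMap.ker φ ⊓ LinearMap.ker ψ :=
      le_inf (le_trans (le_of_lt hCM) hMle) hCψ
    have hKM : LinearMap.ker φ ⊓ LinearMap.ker ψ < LinearMap.ker φ := by
      apply lt_of_le_of_ne inf_le_left
      intro h
      have hmK : m ∈ LinearMap.ker φ ⊓ LinearMap.ker ψ := by
        rw [h, ← hMker]; exact hmM
      exact hψm (LinearMap.mem_ker.1 (Submodule.mem_inf.1 hmK).2)
    have hfK : Module.finrank F (LinearMap.ker φ ⊓ LinearMap.ker ψ : Submodule F (Fin q → F)) = q - 2 := by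
      have h1 := Submodule.finrank_lt_finrank_of_lt hKM
      rw [hk1] at h1
      have h2 := Submodule.finrank_mono hCK
      rw [hfC] at h2
      omega
    have hCeq : C = LinearMap.ker φ ⊓ LinearMap.ker ψ :=
      Submodule.eq_of_le_of_finrank_eq hCK (by rw [hfC, hfK])
    exact ⟨ψ, fun v => by
      rw [hCeq, Submodule.mem_inf, LinearMap.mem_ker, LinearMap.mem_ker]⟩
  obtain ⟨ψ0, hψ0⟩ := getψ C0 hf0 hC0M
  obtain ⟨ψ1, hψ1⟩ := getψ C1 hf1 hC1M
  have hbij : ∀ (ψ : (Fin q → F) →ₗ[F] F) (C : Submodule F (Fin q → F)),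
      (∀ v, v ∈ C ↔ φ v = 0 ∧ ψ v = 0) → HasMinHDistF (C : Set (Fin q → F)) 3 →
      Function.Bijective (fun i : Fin q => ψ (eb i) / φ (eb i)) := by
    intro ψ C hC hCd
    rw [Fintype.bijective_iff_injective_and_card]
    refine ⟨r_injective φ ψ C hC hφi ?_, by simp [hcard]⟩
    intro a ha b hb hab
    exact hCd.1 a ha b hb hab
  have hb0 := hbij ψ0 C0 hψ0 hC0dist
  have hb1 := hbij ψ1 C1 hψ1 hC1dist
  have h01 : ¬ C0 ≤ C1 := fun h =>
    hne (Submodule.eq_of_le_of_finrank_eq h (by rw [hf0, hf1]))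
  have h10 : ¬ C1 ≤ C0 := fun h =>
    hne ((Submodule.eq_of_le_of_finrank_eq h (by rw [hf1, hf0])).symm)
  constructor
  · refine ⟨disjoint_sdiff_sdiff, ?_, ?_, ?_⟩
    · obtain ⟨v, hv1, hv2⟩ := SetLike.not_le_iff_exists.1 h01
      exact ⟨v, hv1, hv2⟩
    · obtain ⟨v, hv1, hv2⟩ := SetLike.not_le_iff_exists.1 h10
      exact ⟨v, hv1, hv2⟩
    · intro x
      by_cases hx : φ x = 0
      · right
        intro y hy hAdj
        have hyM : y ∈ M := by
          rcases hy with hy | hy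
          · exact (le_of_lt hC0M) hy.1
          · exact (le_of_lt hC1M) hy.1
        have hxM : x ∈ M := (hφ0 x).2 hx
        have h1 : hammingDist x y = 1 := hAdj
        have hxy : x ≠ y := by
          intro h
          rw [h, hammingDist_self] at h1
          omega
        have := hMdist.1 x hxM y hyM hxy
        omega
      · obtain ⟨y0, ⟨hy0C, hy0d⟩, hy0u⟩ := unique_nbr φ ψ0 C0 hψ0 hφi hb0 x hx
        obtain ⟨y1, ⟨hy1C, hy1d⟩, hy1u⟩ := unique_nbr φ ψ1 C1 hψ1 hφi hb1 x hx
        by_cases h01' : y0 ∈ C1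
        · right
          have hy01 : y0 = y1 := hy1u y0 ⟨h01', hy0d⟩
          intro y hy hAdj
          have hAdj' : hammingDist x y = 1 := hAdj
          rcases hy with hy | hy
          · have hyy : y = y0 := hy0u y ⟨hy.1, hAdj'⟩
            exact hy.2 (hyy ▸ h01')
          · have hyy : y = y1 := hy1u y ⟨hy.1, hAdj'⟩
            exact hy.2 (by rw [hyy, ← hy01]; exact hy0C)
        · left
          have h10' : y1 ∉ C0 := by
            intro h
            have hyy : y1 = y0 := hy0u y1 ⟨h, hy1d⟩
            exact h01' (hyy ▸ hy1C)
          constructor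
          · refine ⟨y0, ⟨⟨hy0C, h01'⟩, hy0d⟩, ?_⟩
            rintro y ⟨⟨hyC, -⟩, hAdj⟩
            exact hy0u y ⟨hyC, hAdj⟩
          · refine ⟨y1, ⟨⟨hy1C, h10'⟩, hy1d⟩, ?_⟩
            rintro y ⟨⟨hyC, -⟩, hAdj⟩
            exact hy1u y ⟨hyC, hAdj⟩
  · have hfsup : Module.finrank F (C0 ⊔ C1 : Submodule F (Fin q → F)) = q - 1 := by
      have hle : C0 ⊔ C1 ≤ M := sup_le (le_of_lt hC0M) (le_of_lt hC1M)
      have h2 := Submodule.finrank_mono hle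
      rw [hfM] at h2
      have hlt : C0 < C0 ⊔ C1 :=
        lt_of_le_of_ne le_sup_left (fun h => h10 (h ▸ le_sup_right))
      have h3 := Submodule.finrank_lt_finrank_of_lt hlt
      rw [hf0] at h3
      omega
    have hfinf : Module.finrank F (C0 ⊓ C1 : Submodule F (Fin q → F)) = q - 3 := by
      have h4 := Submodule.finrank_sup_add_finrank_inf_eq C0 C1
      rw [hfsup, hf0, hf1] at h4
      omega
    have hcardinf : Nat.card (C0 ⊓ C1 : Submodule F (Fin q → F)) = q ^ (q - 3) := by
      rw [Nat.card_eq_fintype_card, Module.card_eq_pow_finrank (K := F), hcard, hfinf]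
    have e0 : ((C0 : Set (Fin q → F))).ncard = q ^ (q - 2) := by
      rw [← Nat.card_coe_set_eq, SetLike.coe_sort_coe, hC0mds]
    have einf : ((C0 : Set (Fin q → F)) ∩ (C1 : Set (Fin q → F))).ncard = q ^ (q - 3) := by
      rw [← Submodule.coe_inf, ← Nat.card_coe_set_eq, SetLike.coe_sort_coe, hcardinf]
    rw [← Set.diff_self_inter, Set.ncard_diff Set.inter_subset_left, e0, einf]
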